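/- Let κ be an uncountable regular cardinal, endow the space of functions from κ to 2 with the bounded topology (basic open sets are determined by partial functions with domain of size < κ). If this space is κ-compact (every open cover has a subcover of size < κ), then κ is a strongly inaccessible cardinal. -/

import Mathlib

open Cardinal Set

/-- The bounded topology on `^κ2`, with basic open sets determined by partial
functions with domain of size `< κ`. -/
def boundedTopologyPF (κ : Cardinal) : TopologicalSpace (κ.ord.ToType → Bool) :=
  TopologicalSpace.generateFrom
    {U | ∃ (d : Set κ.ord.ToType) (σ : κ.ord.ToType → Bool),
      Cardinal.mk ↥d < κ ∧ U = {y | ∀ i ∈ d, y i = σ i}}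

/-- A topological space is `κ`-compact if every open cover has a subcover of size `< κ`. -/
def kappaCompact (κ : Cardinal) {X : Type*} (t : TopologicalSpace X) : Prop :=
  ∀ 𝒰 : Set (Set X), (∀ U ∈ 𝒰, t.IsOpen U) → ⋃₀ 𝒰 = Set.univ →
    ∃ 𝒱 ⊆ 𝒰, Cardinal.mk ↥𝒱 < κ ∧ ⋃₀ 𝒱 = Set.univ

/-- If `κ` is an uncountable regular cardinal and `^κ2` with the bounded topology is
`κ`-compact, then `κ` is strongly inaccessible. -/
theorem stmt_0 (κ : Cardinal) (hreg : κ.IsRegular) (hunc : ℵ₀ < κ)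
    (hcomp : kappaCompact κ (boundedTopologyPF κ)) : κ.IsInaccessible := by
  classical
  refine Cardinal.IsInaccessible.mk hunc hreg.2 ?_
  intro lam hlam
  by_contra hle
  push_neg at hle
  -- find a subset d of κ.ord.ToType of cardinality lam
  have hmk : Cardinal.mk κ.ord.ToType = κ := by simp
  obtain ⟨d, hd⟩ : ∃ d : Set κ.ord.ToType, Cardinal.mk ↥d = lam := by
    have : lam ≤ Cardinal.mk κ.ord.ToType := by rw [hmk]; exact hlam.le
    exact Cardinal.le_mk_iff_exists_set.mp this
  -- the cover by cylinders determined by all functions on d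
  let U : (↥d → Bool) → Set (κ.ord.ToType → Bool) :=
    fun f => {y | ∀ i (h : i ∈ d), y i = f ⟨i, h⟩}
  let ext : (↥d → Bool) → (κ.ord.ToType → Bool) :=
    fun f i => if h : i ∈ d then f ⟨i, h⟩ else false
  have hext : ∀ f, ext f ∈ U f := by
    intro f i h
    simp [ext, h]
  have hUeq : ∀ f g, (U f ∩ U g).Nonempty → f = g := by
    intro f g ⟨y, hyf, hyg⟩
    funext p
    rw [← hyf p.1 p.2, ← hyg p.1 p.2]
  have hopen : ∀ W ∈ Set.range U, (boundedTopologyPF κ).IsOpen W := by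
    rintro W ⟨f, rfl⟩
    apply TopologicalSpace.GenerateOpen.basic
    refine ⟨d, ext f, hd ▸ hlam, ?_⟩
    ext y
    constructor
    · intro hy i hi
      simp [U, ext, hi, hy i hi]
    · intro hy i hi
      have := hy i hi
      simpa [U, ext, hi] using this
  have hcov : ⋃₀ Set.range U = Set.univ := by
    ext y
    simp only [Set.mem_sUnion, Set.mem_univ, iff_true]
    exact ⟨U (fun p => y p.1), ⟨fun p => y p.1, rfl⟩, fun i h => rfl⟩
  obtain ⟨𝒱, h𝒱sub, h𝒱card, h𝒱cov⟩ := hcomp (Set.range U) hopen hcov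
  have key : ∀ f : ↥d → Bool, ∃ V ∈ 𝒱, V = U f := by
    intro f
    have : ext f ∈ ⋃₀ 𝒱 := h𝒱cov ▸ Set.mem_univ _
    obtain ⟨V, hV, hyV⟩ := this
    refine ⟨V, hV, ?_⟩
    obtain ⟨g, rfl⟩ := h𝒱sub hV
    exact congrArg U (hUeq g f ⟨ext f, hyV, hext f⟩)
  choose V hV hVeq using key
  have hinj : Function.Injective (fun f => (⟨V f, hV f⟩ : ↥𝒱)) := by
    intro f g hfg
    apply hUeq
    have hVV : V f = V g := congrArg Subtype.val hfg
    refine ⟨ext f, hext f, ?_⟩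
    rw [← hVeq g, ← hVV, hVeq f]
    exact hext f
  have hle2 : (2 : Cardinal) ^ lam ≤ Cardinal.mk ↥𝒱 := by
    have := Cardinal.mk_le_of_injective hinj
    rw [Cardinal.mk_arrow, hd, Cardinal.mk_bool] at this
    simpa using this
  exact absurd (hle2.trans_lt h𝒱card) (not_lt.mpr hle)
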